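/- Let g ∈ GL(d,ℝ), and let P ⊆ ℝ^d be a p-dimensional subspace and Q ⊆ ℝ^d a (d−p)-dimensional subspace such that P ⊥ Q and g·P ⊥ g·Q. Then for all p-dimensional subspaces P₁, P₂ with Pᵢ ∩ Q = {0} and d(g·Pᵢ, g·P) < 1/√2 (i = 1,2), one has d(g·P₁, g·P₂) ≥ (m(g|_Q)/(4·‖g|_P‖))·d(P₁,P₂). -/

import Mathlib

noncomputable section

open scoped Matrix RealInnerProductSpace
open Filter Topology

namespace Paper

abbrev Euc (d : ℕ) : Type := EuclideanSpace ℝ (Fin d)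

/-- The action of a `d × d` real matrix on Euclidean space. -/
def act {d : ℕ} (g : Matrix (Fin d) (Fin d) ℝ) (v : Euc d) : Euc d :=
  Matrix.toEuclideanCLM (𝕜 := ℝ) g v

/-- The operator norm of a matrix acting on Euclidean space. -/
def opNorm {d : ℕ} (g : Matrix (Fin d) (Fin d) ℝ) : ℝ :=
  ‖(Matrix.toEuclideanCLM (𝕜 := ℝ) g : Euc d →L[ℝ] Euc d)‖

/-- The underlying matrix of an element of `GL (Fin d) ℝ`. -/
def mat {d : ℕ} (g : GL (Fin d) ℝ) : Matrix (Fin d) (Fin d) ℝ := ↑g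

/-- The `p`-th singular value (`1`-indexed), via the min-max characterization:
`σ_p(g)` is the largest, over `p`-dimensional subspaces `P`, of the minimal
stretch of unit vectors of `P`. -/
def sv {d : ℕ} (g : Matrix (Fin d) (Fin d) ℝ) (p : ℕ) : ℝ :=
  sSup { r | ∃ P : Submodule ℝ (Euc d), Module.finrank ℝ P = p ∧
      r = sInf { t | ∃ v ∈ P, ‖v‖ = 1 ∧ t = ‖act g v‖ } }

/-- `g` has a gap of index `p` if `σ_p(g) > σ_{p+1}(g)`. -/
def HasGap {d : ℕ} (g : Matrix (Fin d) (Fin d) ℝ) (p : ℕ) : Prop :=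
  sv g (p + 1) < sv g p

/-- `U` is a Cartan attractor of index `p` for `g`: for some singular value
decomposition `g = k·a·l` (`k`, `l` orthogonal, `a` diagonal with decreasing
nonnegative entries), `U` is the span of the first `p` columns of `k`. -/
def IsCartanAttractor {d : ℕ} (g : Matrix (Fin d) (Fin d) ℝ) (p : ℕ)
    (U : Submodule ℝ (Euc d)) : Prop :=
  ∃ k l : Matrix (Fin d) (Fin d) ℝ, ∃ σ : Fin d → ℝ,
    k ∈ Matrix.unitaryGroup (Fin d) ℝ ∧ l ∈ Matrix.unitaryGroup (Fin d) ℝ ∧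
    (∀ i j : Fin d, i ≤ j → σ j ≤ σ i) ∧ (∀ i, 0 ≤ σ i) ∧
    g = k * Matrix.diagonal σ * l ∧
    U = Submodule.span ℝ { x : Euc d | ∃ i : Fin d, (i : ℕ) < p ∧
          x = (EuclideanSpace.equiv (Fin d) ℝ).symm (fun j => k j i) }

/-- The Cartan attractor `U_p(g)`; when `g` has a gap of index `p` it is the
unique subspace satisfying `IsCartanAttractor g p`. -/
def cartanAttractor {d : ℕ} (g : Matrix (Fin d) (Fin d) ℝ) (p : ℕ) :
    Submodule ℝ (Euc d) :=
  letI := Classical.propDecidable (∃ U, IsCartanAttractor g p U)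
  if h : ∃ U, IsCartanAttractor g p U then h.choose else ⊥

/-- The angle `∠(P,Q)` between two subspaces: the infimum of angles between
nonzero vectors of `P` and `Q`. -/
def subAngle {d : ℕ} (P Q : Submodule ℝ (Euc d)) : ℝ :=
  sInf { θ | ∃ v ∈ P, v ≠ 0 ∧ ∃ w ∈ Q, w ≠ 0 ∧ θ = InnerProductGeometry.angle v w }

/-- `sin ∠(v,w)`. -/
def sinAngle {d : ℕ} (v w : Euc d) : ℝ := Real.sin (InnerProductGeometry.angle v w)

/-- The distance `d(P,Q) = max_{v ∈ P∖{0}} min_{w ∈ Q∖{0}} sin ∠(v,w)`. -/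
def grassDist {d : ℕ} (P Q : Submodule ℝ (Euc d)) : ℝ :=
  sSup { r | ∃ v ∈ P, v ≠ 0 ∧
      r = sInf { s | ∃ w ∈ Q, w ≠ 0 ∧ s = sinAngle v w } }

/-- The image `g·P` of a subspace under a matrix. -/
def mapMat {d : ℕ} (g : Matrix (Fin d) (Fin d) ℝ) (P : Submodule ℝ (Euc d)) :
    Submodule ℝ (Euc d) :=
  P.map ((Matrix.toEuclideanCLM (𝕜 := ℝ) g : Euc d →L[ℝ] Euc d) : Euc d →ₗ[ℝ] Euc d)

/-- `m(g|_W)`, the minimal stretch of unit vectors of `W` under `g`. -/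
def minRestrict {d : ℕ} (g : Matrix (Fin d) (Fin d) ℝ) (W : Submodule ℝ (Euc d)) : ℝ :=
  sInf { t | ∃ v ∈ W, ‖v‖ = 1 ∧ t = ‖act g v‖ }

/-- `‖g|_W‖`, the maximal stretch of unit vectors of `W` under `g`. -/
def normRestrict {d : ℕ} (g : Matrix (Fin d) (Fin d) ℝ) (W : Submodule ℝ (Euc d)) : ℝ :=
  sSup { t | ∃ v ∈ W, ‖v‖ = 1 ∧ t = ‖act g v‖ }


/- ====================  Auxiliary lemmas  ==================== -/

section Aux

variable {d : ℕ}

lemma sinAngle_nonneg (v w : Euc d) : 0 ≤ sinAngle v w :=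
  Real.sin_nonneg_of_nonneg_of_le_pi (InnerProductGeometry.angle_nonneg _ _)
    (InnerProductGeometry.angle_le_pi _ _)

lemma sinAngle_le_one (v w : Euc d) : sinAngle v w ≤ 1 := Real.sin_le_one _

lemma sinAngle_zero_right (u : Euc d) : sinAngle u 0 = 1 := by
  rw [sinAngle, InnerProductGeometry.angle_zero_right, Real.sin_pi_div_two]

lemma pyth (K : Submodule ℝ (Euc d)) (u : Euc d) :
    ‖((Submodule.orthogonalProjectionOnto K u : K) : Euc d)‖ ^ 2 + ‖u - Submodule.orthogonalProjectionOnto K u‖ ^ 2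
      = ‖u‖ ^ 2 := by
  have h0 : ⟪((Submodule.orthogonalProjectionOnto K u : K) : Euc d), u - Submodule.orthogonalProjectionOnto K u⟫ = 0 :=
    Submodule.inner_right_of_mem_orthogonal (Submodule.coe_mem _)
      (Submodule.sub_starProjection_mem_orthogonal u)
  have h1 := norm_add_sq_real ((Submodule.orthogonalProjectionOnto K u : K) : Euc d)
    (u - Submodule.orthogonalProjectionOnto K u)
  rw [add_sub_cancel, h0] at h1
  linarith

lemma norm_proj_le (K : Submodule ℝ (Euc d)) (u : Euc d) :
    ‖((Submodule.orthogonalProjectionOnto K u : K) : Euc d)‖ ≤ ‖u‖ := by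
  have := pyth K u
  nlinarith [norm_nonneg ((Submodule.orthogonalProjectionOnto K u : K) : Euc d), norm_nonneg u,
    sq_nonneg ‖u - Submodule.orthogonalProjectionOnto K u‖]

lemma norm_sub_proj_le (K : Submodule ℝ (Euc d)) (u : Euc d) :
    ‖u - Submodule.orthogonalProjectionOnto K u‖ ≤ ‖u‖ := by
  have := pyth K u
  nlinarith [norm_nonneg ((Submodule.orthogonalProjectionOnto K u : K) : Euc d), norm_nonneg u,
    norm_nonneg (u - Submodule.orthogonalProjectionOnto K u)]

lemma proj_min {K : Submodule ℝ (Euc d)} (u : Euc d) {z : Euc d} (hz : z ∈ K) :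
    ‖u - Submodule.orthogonalProjectionOnto K u‖ ≤ ‖u - z‖ := by
  have h0 : ⟪u - Submodule.orthogonalProjectionOnto K u, ((Submodule.orthogonalProjectionOnto K u : K) : Euc d) - z⟫ = 0 :=
    Submodule.inner_left_of_mem_orthogonal
      (Submodule.sub_mem K (Submodule.coe_mem _) hz)
      (Submodule.sub_starProjection_mem_orthogonal u)
  have h1 := norm_add_sq_real (u - Submodule.orthogonalProjectionOnto K u)
    (((Submodule.orthogonalProjectionOnto K u : K) : Euc d) - z)
  have h2 : (u - Submodule.orthogonalProjectionOnto K u) + (((Submodule.orthogonalProjectionOnto K u : K) : Euc d) - z)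
      = u - z := by abel
  rw [h2, h0] at h1
  nlinarith [norm_nonneg (u - z), norm_nonneg (u - Submodule.orthogonalProjectionOnto K u),
    sq_nonneg ‖((Submodule.orthogonalProjectionOnto K u : K) : Euc d) - z‖]

lemma sinAngle_mul_norm {u w : Euc d} (hu : u ≠ 0) (hw : w ≠ 0) :
    sinAngle u w * ‖u‖ = ‖u - ((⟪w, u⟫) / ‖w‖ ^ 2) • w‖ := by
  have hwn : (0:ℝ) < ‖w‖ := norm_pos_iff.mpr hw
  have hN : 0 ≤ ⟪u,u⟫ * ⟪w,w⟫ - ⟪u,w⟫ * ⟪u,w⟫ :=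
    sub_nonneg.mpr (real_inner_mul_inner_self_le u w)
  have hs := InnerProductGeometry.sin_angle_mul_norm_mul_norm u w
  have hL2 : (sinAngle u w * ‖u‖)^2 * ‖w‖^2 = ⟪u,u⟫ * ⟪w,w⟫ - ⟪u,w⟫ * ⟪u,w⟫ := by
    have h : (sinAngle u w * ‖u‖ * ‖w‖)^2 = (⟪u,u⟫ * ⟪w,w⟫ - ⟪u,w⟫ * ⟪u,w⟫) := by
      rw [show sinAngle u w * ‖u‖ * ‖w‖
          = Real.sin (InnerProductGeometry.angle u w) * (‖u‖ * ‖w‖) by rw [sinAngle]; ring,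
        hs, Real.sq_sqrt hN]
    nlinarith [h]
  have hR2 : ‖u - ((⟪w, u⟫) / ‖w‖ ^ 2) • w‖^2 * ‖w‖^2 = ⟪u,u⟫ * ⟪w,w⟫ - ⟪u,w⟫ * ⟪u,w⟫ := by
    rw [norm_sub_sq_real, real_inner_smul_right, norm_smul, real_inner_comm w u,
      real_inner_self_eq_norm_sq, real_inner_self_eq_norm_sq]
    rw [Real.norm_eq_abs, mul_pow, sq_abs]
    field_simp
    ring
  have hEq : (sinAngle u w * ‖u‖)^2 = (‖u - ((⟪w, u⟫) / ‖w‖ ^ 2) • w‖)^2 := by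
    have hw2 : (0:ℝ) < ‖w‖^2 := by positivity
    nlinarith [hL2, hR2]
  have hLnn : 0 ≤ sinAngle u w * ‖u‖ := mul_nonneg (sinAngle_nonneg u w) (norm_nonneg u)
  calc sinAngle u w * ‖u‖ = Real.sqrt ((sinAngle u w * ‖u‖)^2) := (Real.sqrt_sq hLnn).symm
    _ = Real.sqrt ((‖u - ((⟪w, u⟫) / ‖w‖ ^ 2) • w‖)^2) := by rw [hEq]
    _ = _ := Real.sqrt_sq (norm_nonneg _)

lemma dist_le_sinAngle {W : Submodule ℝ (Euc d)} {u w : Euc d} (hu : u ≠ 0)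
    (hw : w ∈ W) : ‖u - Submodule.orthogonalProjectionOnto W u‖ ≤ sinAngle u w * ‖u‖ := by
  by_cases h0 : w = 0
  · subst h0
    rw [sinAngle_zero_right, one_mul]
    simpa using proj_min u (Submodule.zero_mem W)
  · rw [sinAngle_mul_norm hu h0]
    exact proj_min u (Submodule.smul_mem W _ hw)

lemma inner_proj_self (W : Submodule ℝ (Euc d)) (u : Euc d) :
    ⟪((Submodule.orthogonalProjectionOnto W u : W) : Euc d), u⟫
      = ‖((Submodule.orthogonalProjectionOnto W u : W) : Euc d)‖^2 := by
  have h0 : ⟪((Submodule.orthogonalProjectionOnto W u : W) : Euc d), u - Submodule.orthogonalProjectionOnto W u⟫ = 0 :=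
    Submodule.inner_right_of_mem_orthogonal (Submodule.coe_mem _)
      (Submodule.sub_starProjection_mem_orthogonal u)
  have h2 : ⟪((Submodule.orthogonalProjectionOnto W u : W) : Euc d), u⟫
      - ⟪((Submodule.orthogonalProjectionOnto W u : W) : Euc d), ((Submodule.orthogonalProjectionOnto W u : W) : Euc d)⟫
      = 0 := by rw [← inner_sub_right]; exact h0
  rw [real_inner_self_eq_norm_sq] at h2
  linarith

lemma sinAngle_proj {W : Submodule ℝ (Euc d)} {u : Euc d} (hu : u ≠ 0)
    (hp : ((Submodule.orthogonalProjectionOnto W u : W) : Euc d) ≠ 0) :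
    sinAngle u ((Submodule.orthogonalProjectionOnto W u : W) : Euc d) * ‖u‖
      = ‖u - Submodule.orthogonalProjectionOnto W u‖ := by
  rw [sinAngle_mul_norm hu hp, inner_proj_self]
  congr 1
  rw [div_self (pow_ne_zero 2 (norm_ne_zero_iff.mpr hp)), one_smul]

/-- The inner set appearing in the definition of `grassDist`. -/
def aset (u : Euc d) (W : Submodule ℝ (Euc d)) : Set ℝ :=
  { s | ∃ w ∈ W, w ≠ 0 ∧ s = sinAngle u w }

lemma aset_bddBelow (u : Euc d) (W : Submodule ℝ (Euc d)) : BddBelow (aset u W) := by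
  refine ⟨0, ?_⟩
  rintro s ⟨w, _, _, rfl⟩
  exact sinAngle_nonneg u w

lemma aset_nonempty (u : Euc d) {W : Submodule ℝ (Euc d)} (hW : W ≠ ⊥) :
    (aset u W).Nonempty := by
  obtain ⟨w, hwW, hw0⟩ := Submodule.ne_bot_iff W |>.mp hW
  exact ⟨sinAngle u w, w, hwW, hw0, rfl⟩

lemma sInf_aset_le_one (u : Euc d) {W : Submodule ℝ (Euc d)} (hW : W ≠ ⊥) :
    sInf (aset u W) ≤ 1 := by
  obtain ⟨w, hwW, hw0⟩ := Submodule.ne_bot_iff W |>.mp hW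
  exact (csInf_le (aset_bddBelow u W) ⟨w, hwW, hw0, rfl⟩).trans (sinAngle_le_one u w)

lemma sInf_aset_nonneg (u : Euc d) (W : Submodule ℝ (Euc d)) :
    0 ≤ sInf (aset u W) := by
  apply Real.sInf_nonneg
  rintro s ⟨w, _, _, rfl⟩
  exact sinAngle_nonneg u w

lemma sInf_aset_le_dist {W : Submodule ℝ (Euc d)} (hW : W ≠ ⊥) {u : Euc d}
    (hu : u ≠ 0) : sInf (aset u W) ≤ ‖u - Submodule.orthogonalProjectionOnto W u‖ / ‖u‖ := by
  have hun : (0:ℝ) < ‖u‖ := norm_pos_iff.mpr hu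
  by_cases hp : ((Submodule.orthogonalProjectionOnto W u : W) : Euc d) = 0
  · have h : ‖u - Submodule.orthogonalProjectionOnto W u‖ / ‖u‖ = 1 := by
      rw [hp, sub_zero, div_self hun.ne']
    rw [h]
    exact sInf_aset_le_one u hW
  · have h1 : sInf (aset u W) ≤ sinAngle u ((Submodule.orthogonalProjectionOnto W u : W) : Euc d) :=
      csInf_le (aset_bddBelow u W) ⟨_, Submodule.coe_mem _, hp, rfl⟩
    rw [le_div_iff₀ hun]
    calc sInf (aset u W) * ‖u‖
        ≤ sinAngle u ((Submodule.orthogonalProjectionOnto W u : W) : Euc d) * ‖u‖ :=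
          mul_le_mul_of_nonneg_right h1 hun.le
      _ = ‖u - Submodule.orthogonalProjectionOnto W u‖ := sinAngle_proj hu hp

lemma dist_div_le_sInf_aset {W : Submodule ℝ (Euc d)} (hW : W ≠ ⊥) {u : Euc d}
    (hu : u ≠ 0) : ‖u - Submodule.orthogonalProjectionOnto W u‖ / ‖u‖ ≤ sInf (aset u W) := by
  have hun : (0:ℝ) < ‖u‖ := norm_pos_iff.mpr hu
  apply le_csInf (aset_nonempty u hW)
  rintro s ⟨w, hwW, _, rfl⟩
  rw [div_le_iff₀ hun]
  exact dist_le_sinAngle hu hwW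

lemma grassDist_nonneg (S W : Submodule ℝ (Euc d)) : 0 ≤ grassDist S W := by
  apply Real.sSup_nonneg
  rintro r ⟨v, hv, hv0, rfl⟩
  exact sInf_aset_nonneg v W

lemma le_grassDist {S W : Submodule ℝ (Euc d)} (hW : W ≠ ⊥) {v : Euc d} (hv : v ∈ S)
    (hv0 : v ≠ 0) : sInf (aset v W) ≤ grassDist S W := by
  apply le_csSup
  · refine ⟨1, ?_⟩
    rintro r ⟨v', hv', hv'0, rfl⟩
    exact sInf_aset_le_one v' hW
  · exact ⟨v, hv, hv0, rfl⟩

lemma act_sub (g : Matrix (Fin d) (Fin d) ℝ) (a b : Euc d) :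
    act g (a - b) = act g a - act g b := map_sub (Matrix.toEuclideanCLM (𝕜 := ℝ) g) a b

lemma act_add (g : Matrix (Fin d) (Fin d) ℝ) (a b : Euc d) :
    act g (a + b) = act g a + act g b := map_add (Matrix.toEuclideanCLM (𝕜 := ℝ) g) a b

lemma act_smul (g : Matrix (Fin d) (Fin d) ℝ) (a : ℝ) (b : Euc d) :
    act g (a • b) = a • act g b := map_smul (Matrix.toEuclideanCLM (𝕜 := ℝ) g) a b

lemma act_zero (g : Matrix (Fin d) (Fin d) ℝ) : act g (0 : Euc d) = 0 :=
  map_zero (Matrix.toEuclideanCLM (𝕜 := ℝ) g)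

lemma act_inv (g : GL (Fin d) ℝ) (v : Euc d) :
    act (mat g⁻¹) (act (mat g) v) = v := by
  have h : (Matrix.toEuclideanCLM (𝕜 := ℝ) (mat g⁻¹)) * (Matrix.toEuclideanCLM (𝕜 := ℝ) (mat g))
      = 1 := by
    rw [← map_mul]
    have h2 : (mat g⁻¹) * (mat g) = 1 := by
      show ((g⁻¹ : GL (Fin d) ℝ) : Matrix (Fin d) (Fin d) ℝ) * (g : Matrix (Fin d) (Fin d) ℝ) = 1
      exact g.inv_mul
    rw [h2, map_one]
  have h3 := congrArg (fun f : Euc d →L[ℝ] Euc d => f v) h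
  simpa [act, ContinuousLinearMap.mul_apply] using h3

lemma act_inv' (g : GL (Fin d) ℝ) (v : Euc d) :
    act (mat g) (act (mat g⁻¹) v) = v := by
  have h : (Matrix.toEuclideanCLM (𝕜 := ℝ) (mat g)) * (Matrix.toEuclideanCLM (𝕜 := ℝ) (mat g⁻¹))
      = 1 := by
    rw [← map_mul]
    have h2 : (mat g) * (mat g⁻¹) = 1 := by
      show (g : Matrix (Fin d) (Fin d) ℝ) * ((g⁻¹ : GL (Fin d) ℝ) : Matrix (Fin d) (Fin d) ℝ) = 1
      exact g.mul_inv
    rw [h2, map_one]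
  have h3 := congrArg (fun f : Euc d →L[ℝ] Euc d => f v) h
  simpa [act, ContinuousLinearMap.mul_apply] using h3

lemma act_injective (g : GL (Fin d) ℝ) : Function.Injective (act (mat g)) :=
  Function.LeftInverse.injective (act_inv g)

/-- The linear equivalence of `Euc d` induced by `g : GL (Fin d) ℝ`. -/
def actEquiv (g : GL (Fin d) ℝ) : Euc d ≃ₗ[ℝ] Euc d :=
  LinearEquiv.ofLinear
    ((Matrix.toEuclideanCLM (𝕜 := ℝ) (mat g) : Euc d →L[ℝ] Euc d) : Euc d →ₗ[ℝ] Euc d)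
    ((Matrix.toEuclideanCLM (𝕜 := ℝ) (mat g⁻¹) : Euc d →L[ℝ] Euc d) : Euc d →ₗ[ℝ] Euc d)
    (by apply LinearMap.ext; intro v
        simpa [LinearMap.comp_apply, act] using act_inv' g v)
    (by apply LinearMap.ext; intro v
        simpa [LinearMap.comp_apply, act] using act_inv g v)

lemma finrank_mapMat (g : GL (Fin d) ℝ) (S : Submodule ℝ (Euc d)) :
    Module.finrank ℝ (mapMat (mat g) S) = Module.finrank ℝ S := by
  have h : mapMat (mat g) S = S.map (actEquiv g : Euc d →ₗ[ℝ] Euc d) := rfl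
  rw [h]
  exact LinearEquiv.finrank_map_eq (actEquiv g) S

lemma mem_mapMat {g : Matrix (Fin d) (Fin d) ℝ} {S : Submodule ℝ (Euc d)} {z : Euc d} :
    z ∈ mapMat g S ↔ ∃ s ∈ S, act g s = z := by
  simp [mapMat, Submodule.mem_map, act]

lemma minRestrict_nonneg (g : Matrix (Fin d) (Fin d) ℝ) (S : Submodule ℝ (Euc d)) :
    0 ≤ minRestrict g S := by
  apply Real.sInf_nonneg
  rintro t ⟨v, hv, h1, rfl⟩
  positivity

lemma normRestrict_nonneg (g : Matrix (Fin d) (Fin d) ℝ) (S : Submodule ℝ (Euc d)) :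
    0 ≤ normRestrict g S := by
  apply Real.sSup_nonneg
  rintro t ⟨v, hv, h1, rfl⟩
  positivity

lemma minRestrict_le (g : Matrix (Fin d) (Fin d) ℝ) {S : Submodule ℝ (Euc d)} {z : Euc d}
    (hz : z ∈ S) : minRestrict g S * ‖z‖ ≤ ‖act g z‖ := by
  by_cases h0 : z = 0
  · simp [h0, act_zero]
  · have hzn : (0:ℝ) < ‖z‖ := norm_pos_iff.mpr h0
    have hmem : ‖act g (‖z‖⁻¹ • z)‖ ∈ {t | ∃ v ∈ S, ‖v‖ = 1 ∧ t = ‖act g v‖} :=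
      ⟨‖z‖⁻¹ • z, Submodule.smul_mem _ _ hz,
        by rw [norm_smul, Real.norm_eq_abs, abs_inv, abs_norm, inv_mul_cancel₀ hzn.ne'], rfl⟩
    have hle : minRestrict g S ≤ ‖act g (‖z‖⁻¹ • z)‖ :=
      csInf_le ⟨0, by rintro t ⟨v, _, _, rfl⟩; positivity⟩ hmem
    rw [act_smul, norm_smul, Real.norm_eq_abs, abs_inv, abs_norm] at hle
    calc minRestrict g S * ‖z‖ ≤ (‖z‖⁻¹ * ‖act g z‖) * ‖z‖ :=
          mul_le_mul_of_nonneg_right hle hzn.le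
      _ = ‖act g z‖ := by field_simp

lemma le_normRestrict (g : Matrix (Fin d) (Fin d) ℝ) {S : Submodule ℝ (Euc d)} {z : Euc d}
    (hz : z ∈ S) : ‖act g z‖ ≤ normRestrict g S * ‖z‖ := by
  by_cases h0 : z = 0
  · simp [h0, act_zero]
  · have hzn : (0:ℝ) < ‖z‖ := norm_pos_iff.mpr h0
    have hmem : ‖act g (‖z‖⁻¹ • z)‖ ∈ {t | ∃ v ∈ S, ‖v‖ = 1 ∧ t = ‖act g v‖} :=
      ⟨‖z‖⁻¹ • z, Submodule.smul_mem _ _ hz,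
        by rw [norm_smul, Real.norm_eq_abs, abs_inv, abs_norm, inv_mul_cancel₀ hzn.ne'], rfl⟩
    have hbdd : BddAbove {t | ∃ v ∈ S, ‖v‖ = 1 ∧ t = ‖act g v‖} := by
      refine ⟨‖(Matrix.toEuclideanCLM (𝕜 := ℝ) g : Euc d →L[ℝ] Euc d)‖, ?_⟩
      rintro t ⟨v, _, h1, rfl⟩
      calc ‖act g v‖ ≤ ‖(Matrix.toEuclideanCLM (𝕜 := ℝ) g : Euc d →L[ℝ] Euc d)‖ * ‖v‖ :=
            (Matrix.toEuclideanCLM (𝕜 := ℝ) g).le_opNorm v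
        _ = _ := by rw [h1, mul_one]
    have hle : ‖act g (‖z‖⁻¹ • z)‖ ≤ normRestrict g S := le_csSup hbdd hmem
    rw [act_smul, norm_smul, Real.norm_eq_abs, abs_inv, abs_norm] at hle
    calc ‖act g z‖ = (‖z‖⁻¹ * ‖act g z‖) * ‖z‖ := by field_simp
      _ ≤ normRestrict g S * ‖z‖ := mul_le_mul_of_nonneg_right hle hzn.le

end Aux

set_option maxHeartbeats 1000000

/-- Lemma 2.8 (Lemma `l.expand`) of the paper. -/
theorem stmt5 {d : ℕ} (p : ℕ) (g : GL (Fin d) ℝ)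
    (P Q : Submodule ℝ (Euc d))
    (hP : Module.finrank ℝ P = p) (hQ : Module.finrank ℝ Q = d - p)
    (hPQ : ∀ v ∈ P, ∀ w ∈ Q, ⟪v, w⟫ = (0 : ℝ))
    (hgPQ : ∀ v ∈ mapMat (mat g) P, ∀ w ∈ mapMat (mat g) Q, ⟪v, w⟫ = (0 : ℝ))
    (P₁ P₂ : Submodule ℝ (Euc d))
    (h1 : Module.finrank ℝ P₁ = p) (h2 : Module.finrank ℝ P₂ = p)
    (h1Q : P₁ ⊓ Q = ⊥) (h2Q : P₂ ⊓ Q = ⊥)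
    (hc1 : grassDist (mapMat (mat g) P₁) (mapMat (mat g) P) < 1 / Real.sqrt 2)
    (hc2 : grassDist (mapMat (mat g) P₂) (mapMat (mat g) P) < 1 / Real.sqrt 2) :
    (minRestrict (mat g) Q / (4 * normRestrict (mat g) P)) * grassDist P₁ P₂ ≤
      grassDist (mapMat (mat g) P₁) (mapMat (mat g) P₂) := by
  classical
  have hDnn : 0 ≤ grassDist P₁ P₂ := grassDist_nonneg _ _
  have hD'nn : 0 ≤ grassDist (mapMat (mat g) P₁) (mapMat (mat g) P₂) := grassDist_nonneg _ _
  rcases le_or_gt (minRestrict (mat g) Q / (4 * normRestrict (mat g) P)) 0 with hc0 | hcpos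
  · have h1 : minRestrict (mat g) Q / (4 * normRestrict (mat g) P) * grassDist P₁ P₂ ≤ 0 :=
      mul_nonpos_iff.mpr (Or.inr ⟨hc0, hDnn⟩)
    linarith
  -- Main case.
  have hmnn : 0 ≤ minRestrict (mat g) Q := minRestrict_nonneg _ _
  have hMnn : 0 ≤ normRestrict (mat g) P := normRestrict_nonneg _ _
  have hMpos : 0 < normRestrict (mat g) P := by
    rcases lt_or_ge 0 (normRestrict (mat g) P) with h | h
    · exact h
    · exfalso
      have : minRestrict (mat g) Q / (4 * normRestrict (mat g) P) ≤ 0 :=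
        div_nonpos_iff.mpr (Or.inl ⟨hmnn, by linarith⟩)
      linarith
  have hmpos : 0 < minRestrict (mat g) Q := by
    rcases lt_or_ge 0 (minRestrict (mat g) Q) with h | h
    · exact h
    · exfalso
      have : minRestrict (mat g) Q / (4 * normRestrict (mat g) P) ≤ 0 :=
        div_nonpos_iff.mpr (Or.inr ⟨h, by linarith⟩)
      linarith
  -- P and Q contain unit vectors.
  have hPunit : ∃ v ∈ P, ‖v‖ = 1 := by
    by_contra hcon
    push_neg at hcon
    have he : { t | ∃ v ∈ P, ‖v‖ = 1 ∧ t = ‖act (mat g) v‖ } = (∅ : Set ℝ) := by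
      apply Set.eq_empty_iff_forall_notMem.mpr
      rintro t ⟨v, hv, h1, -⟩
      exact hcon v hv h1
    have : normRestrict (mat g) P = 0 := by rw [normRestrict, he, Real.sSup_empty]
    linarith
  have hQunit : ∃ v ∈ Q, ‖v‖ = 1 := by
    by_contra hcon
    push_neg at hcon
    have he : { t | ∃ v ∈ Q, ‖v‖ = 1 ∧ t = ‖act (mat g) v‖ } = (∅ : Set ℝ) := by
      apply Set.eq_empty_iff_forall_notMem.mpr
      rintro t ⟨v, hv, h1, -⟩
      exact hcon v hv h1
    have : minRestrict (mat g) Q = 0 := by rw [minRestrict, he, Real.sInf_empty]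
    linarith
  have hPne : P ≠ ⊥ := by
    obtain ⟨v, hv, h1⟩ := hPunit
    exact (Submodule.ne_bot_iff P).mpr ⟨v, hv, by intro h; rw [h] at h1; simp at h1⟩
  have hppos : p ≠ 0 := by
    intro h
    rw [h] at hP
    exact hPne (Submodule.finrank_eq_zero.mp hP)
  have hP₁ne : P₁ ≠ ⊥ := by
    intro h
    rw [h, finrank_bot] at h1
    exact hppos h1.symm
  have hP₂ne : P₂ ≠ ⊥ := by
    intro h
    rw [h, finrank_bot] at h2
    exact hppos h2.symm
  have hpled : p ≤ d := by
    have := Submodule.finrank_le P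
    rwa [hP, finrank_euclideanSpace_fin] at this
  -- Q is the orthogonal complement of P.
  have hQP : Q = Pᗮ := by
    have hle : Q ≤ Pᗮ := fun w hw => (Submodule.mem_orthogonal P w).mpr
      (fun u hu => hPQ u hu w hw)
    apply Submodule.eq_of_le_of_finrank_eq hle
    have hsum : Module.finrank ℝ P + Module.finrank ℝ Pᗮ = d := by
      simpa [finrank_euclideanSpace_fin] using P.finrank_add_finrank_orthogonal
    rw [hQ]
    omega
  -- The image of Q is the orthogonal complement of F := g·P.
  set F := mapMat (mat g) P with hF
  have hFQ : mapMat (mat g) Q = Fᗮ := by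
    have hle : mapMat (mat g) Q ≤ Fᗮ := fun z hz => (Submodule.mem_orthogonal F z).mpr
      (fun u hu => hgPQ u hu z hz)
    apply Submodule.eq_of_le_of_finrank_eq hle
    have hsum : Module.finrank ℝ F + Module.finrank ℝ Fᗮ = d := by
      simpa [finrank_euclideanSpace_fin] using F.finrank_add_finrank_orthogonal
    have h3 : Module.finrank ℝ F = p := by rw [hF, finrank_mapMat, hP]
    rw [finrank_mapMat, hQ]
    omega
  have hFne : F ≠ ⊥ := by
    obtain ⟨v, hv, hnv⟩ := hPunit
    have hv0 : v ≠ 0 := by intro h; rw [h] at hnv; simp at hnv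
    refine (Submodule.ne_bot_iff F).mpr ⟨act (mat g) v, mem_mapMat.mpr ⟨v, hv, rfl⟩, ?_⟩
    intro h
    exact hv0 (act_injective g (by rw [h, act_zero]))
  have hgP₂ne : mapMat (mat g) P₂ ≠ ⊥ := by
    obtain ⟨w, hw, hw0⟩ := (Submodule.ne_bot_iff P₂).mp hP₂ne
    refine (Submodule.ne_bot_iff _).mpr ⟨act (mat g) w, mem_mapMat.mpr ⟨w, hw, rfl⟩, ?_⟩
    intro h
    exact hw0 (act_injective g (by rw [h, act_zero]))
  -- The key component identity: π_F (g z) = g (π_P z).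
  have hprojF : ∀ z : Euc d, ((Submodule.orthogonalProjectionOnto F (act (mat g) z) : F) : Euc d)
      = act (mat g) ((Submodule.orthogonalProjectionOnto P z : P) : Euc d) := by
    intro z
    have hyQ : z - ((Submodule.orthogonalProjectionOnto P z : P) : Euc d) ∈ Q := by
      rw [hQP]; exact Submodule.sub_starProjection_mem_orthogonal z
    have hdec : act (mat g) z = act (mat g) ((Submodule.orthogonalProjectionOnto P z : P) : Euc d)
        + act (mat g) (z - ((Submodule.orthogonalProjectionOnto P z : P) : Euc d)) := by
      rw [← act_add, add_sub_cancel]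
    have m1 : ((Submodule.orthogonalProjectionOnto F
          (act (mat g) ((Submodule.orthogonalProjectionOnto P z : P) : Euc d)) : F) : Euc d)
        = act (mat g) ((Submodule.orthogonalProjectionOnto P z : P) : Euc d) :=
      Submodule.starProjection_eq_self_iff.mpr (mem_mapMat.mpr ⟨_, Submodule.coe_mem _, rfl⟩)
    have m2 : Submodule.orthogonalProjectionOnto F
          (act (mat g) (z - ((Submodule.orthogonalProjectionOnto P z : P) : Euc d))) = 0 :=
      Submodule.orthogonalProjectionOnto_apply_of_mem_orthogonal
        (hFQ ▸ mem_mapMat.mpr ⟨_, hyQ, rfl⟩)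
    rw [hdec, map_add, Submodule.coe_add, m1, m2, Submodule.coe_zero, add_zero]
  -- Consequence of the closeness hypotheses.
  have hclose : ∀ S : Submodule ℝ (Euc d), grassDist (mapMat (mat g) S) F < 1 / Real.sqrt 2 →
      ∀ s ∈ S, ‖act (mat g) s - Submodule.orthogonalProjectionOnto F (act (mat g) s)‖
        ≤ ‖((Submodule.orthogonalProjectionOnto F (act (mat g) s) : F) : Euc d)‖ := by
    intro S hS s hs
    by_cases h0 : act (mat g) s = 0
    · rw [h0]
      simp
    · have hzmem : act (mat g) s ∈ mapMat (mat g) S := mem_mapMat.mpr ⟨s, hs, rfl⟩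
      have hb1 : ‖act (mat g) s - Submodule.orthogonalProjectionOnto F (act (mat g) s)‖ / ‖act (mat g) s‖
          ≤ sInf (aset (act (mat g) s) F) := dist_div_le_sInf_aset hFne h0
      have hb2 : sInf (aset (act (mat g) s) F) ≤ grassDist (mapMat (mat g) S) F :=
        le_grassDist hFne hzmem h0
      have hb3 : ‖act (mat g) s - Submodule.orthogonalProjectionOnto F (act (mat g) s)‖ / ‖act (mat g) s‖
          < 1 / Real.sqrt 2 := lt_of_le_of_lt (hb1.trans hb2) hS
      have hzn : (0:ℝ) < ‖act (mat g) s‖ := norm_pos_iff.mpr h0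
      have hb4 : ‖act (mat g) s - Submodule.orthogonalProjectionOnto F (act (mat g) s)‖
          < 1 / Real.sqrt 2 * ‖act (mat g) s‖ := (div_lt_iff₀ hzn).mp hb3
      have hs2 : (0:ℝ) < Real.sqrt 2 := Real.sqrt_pos.mpr (by norm_num)
      have hsq : (1 / Real.sqrt 2 * ‖act (mat g) s‖)^2 = ‖act (mat g) s‖^2 / 2 := by
        rw [mul_pow, div_pow, one_pow, Real.sq_sqrt (by norm_num : (0:ℝ) ≤ 2)]
        ring
      have hb5 : ‖act (mat g) s - Submodule.orthogonalProjectionOnto F (act (mat g) s)‖^2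
          < ‖act (mat g) s‖^2 / 2 := by
        rw [← hsq]
        exact pow_lt_pow_left₀ hb4 (norm_nonneg _) (by norm_num)
      have hpy := pyth F (act (mat g) s)
      have hb6 : ‖act (mat g) s - Submodule.orthogonalProjectionOnto F (act (mat g) s)‖^2
          ≤ ‖((Submodule.orthogonalProjectionOnto F (act (mat g) s) : F) : Euc d)‖^2 := by linarith
      rw [← Real.sqrt_sq (norm_nonneg (act (mat g) s
          - Submodule.orthogonalProjectionOnto F (act (mat g) s))),
        ← Real.sqrt_sq (norm_nonneg ((Submodule.orthogonalProjectionOnto F (act (mat g) s) : F) : Euc d))]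
      exact Real.sqrt_le_sqrt hb6
  -- Growth bound for vectors of P₁.
  have hTv2M : ∀ v ∈ P₁, ‖act (mat g) v‖ ≤ 2 * normRestrict (mat g) P * ‖v‖ := by
    intro v hv
    have hcl := hclose P₁ hc1 v hv
    have htri : ‖act (mat g) v‖
        ≤ ‖((Submodule.orthogonalProjectionOnto F (act (mat g) v) : F) : Euc d)‖
          + ‖act (mat g) v - Submodule.orthogonalProjectionOnto F (act (mat g) v)‖ := by
      calc ‖act (mat g) v‖ = ‖((Submodule.orthogonalProjectionOnto F (act (mat g) v) : F) : Euc d)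
            + (act (mat g) v - Submodule.orthogonalProjectionOnto F (act (mat g) v))‖ := by
              rw [add_sub_cancel]
        _ ≤ _ := norm_add_le _ _
    have h2' : ‖act (mat g) v‖
        ≤ 2 * ‖((Submodule.orthogonalProjectionOnto F (act (mat g) v) : F) : Euc d)‖ := by linarith
    rw [hprojF v] at h2'
    have h3 : ‖act (mat g) ((Submodule.orthogonalProjectionOnto P v : P) : Euc d)‖
        ≤ normRestrict (mat g) P * ‖((Submodule.orthogonalProjectionOnto P v : P) : Euc d)‖ :=
      le_normRestrict (mat g) (Submodule.coe_mem _)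
    have h4 : ‖((Submodule.orthogonalProjectionOnto P v : P) : Euc d)‖ ≤ ‖v‖ := norm_proj_le P v
    nlinarith [norm_nonneg (act (mat g) v)]
  -- Surjectivity of the projection P₂ → P.
  have hsurj : ∀ x ∈ P, ∃ u ∈ P₂, ((Submodule.orthogonalProjectionOnto P u : P) : Euc d) = x := by
    set f : P₂ →ₗ[ℝ] P :=
      ((Submodule.orthogonalProjectionOnto P : Euc d →L[ℝ] P) : Euc d →ₗ[ℝ] P).comp P₂.subtype with hf
    have hinj : Function.Injective f := by
      intro a b hab
      have hfa : f a = Submodule.orthogonalProjectionOnto P (a : Euc d) := rfl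
      have hfb : f b = Submodule.orthogonalProjectionOnto P (b : Euc d) := rfl
      have hab' : Submodule.orthogonalProjectionOnto P ((a : Euc d) - (b : Euc d)) = 0 := by
        rw [map_sub, ← hfa, ← hfb, hab, sub_self]
      have hmem : ((a : Euc d) - (b : Euc d)) ∈ Pᗮ := by
        have hsub : ((a : Euc d) - (b : Euc d)) - ((Submodule.orthogonalProjectionOnto P ((a : Euc d) - (b : Euc d)) : P) : Euc d) ∈ Pᗮ :=
          Submodule.sub_starProjection_mem_orthogonal (K := P) ((a : Euc d) - (b : Euc d))
        rw [hab'] at hsub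
        simpa using hsub
      have hP₂mem : ((a : Euc d) - (b : Euc d)) ∈ P₂ :=
        Submodule.sub_mem _ a.2 b.2
      have : ((a : Euc d) - (b : Euc d)) ∈ P₂ ⊓ Q := ⟨hP₂mem, hQP ▸ hmem⟩
      rw [h2Q] at this
      have hz : (a : Euc d) - (b : Euc d) = 0 := this
      exact Subtype.ext (by rw [← sub_eq_zero]; exact hz)
    have hsur : Function.Surjective f := by
      rw [← LinearMap.range_eq_top]
      apply Submodule.eq_top_of_finrank_eq
      rw [LinearMap.finrank_range_of_inj hinj]
      have e1 : Module.finrank ℝ P₂ = p := h2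
      have e2 : Module.finrank ℝ P = p := hP
      rw [e1, e2]
    intro x hx
    obtain ⟨w, hw⟩ := hsur ⟨x, hx⟩
    exact ⟨(w : Euc d), w.2, by rw [show ((Submodule.orthogonalProjectionOnto P (w : Euc d) : P) : Euc d)
      = ((f w : P) : Euc d) from rfl, hw]⟩
  -- The key estimate.
  have key : ∀ v ∈ P₁, ∀ w ∈ P₂, minRestrict (mat g) Q / 2 * ‖v - Submodule.orthogonalProjectionOnto P₂ v‖
      ≤ ‖act (mat g) v - act (mat g) w‖ := by
    intro v hv w hw
    obtain ⟨u, huP₂, hux⟩ := hsurj ((Submodule.orthogonalProjectionOnto P v : P) : Euc d) (Submodule.coe_mem _)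
    have hvu : v - u ∈ Q := by
      rw [hQP]
      have ha1 : v - ((Submodule.orthogonalProjectionOnto P v : P) : Euc d) ∈ Pᗮ :=
        Submodule.sub_starProjection_mem_orthogonal v
      have ha2 : u - ((Submodule.orthogonalProjectionOnto P v : P) : Euc d) ∈ Pᗮ := by
        have : u - ((Submodule.orthogonalProjectionOnto P u : P) : Euc d) ∈ Pᗮ :=
          Submodule.sub_starProjection_mem_orthogonal (K := P) u
        rwa [hux] at this
      have hd : v - u = (v - ((Submodule.orthogonalProjectionOnto P v : P) : Euc d))
          - (u - ((Submodule.orthogonalProjectionOnto P v : P) : Euc d)) := by abel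
      rw [hd]
      exact Submodule.sub_mem _ ha1 ha2
    have hπ : ((Submodule.orthogonalProjectionOnto F (act (mat g) v - act (mat g) w) : F) : Euc d)
        = act (mat g) (((Submodule.orthogonalProjectionOnto P v : P) : Euc d)
            - ((Submodule.orthogonalProjectionOnto P w : P) : Euc d)) := by
      rw [← act_sub, hprojF (v - w)]
      congr 1
      rw [map_sub, Submodule.coe_sub]
    have hb1 : ‖act (mat g) (((Submodule.orthogonalProjectionOnto P v : P) : Euc d)
        - ((Submodule.orthogonalProjectionOnto P w : P) : Euc d))‖
        ≤ ‖act (mat g) v - act (mat g) w‖ := by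
      rw [← hπ]
      exact norm_proj_le F _
    have hs2 : w - u ∈ P₂ := Submodule.sub_mem _ hw huP₂
    have hcl := hclose P₂ hc2 (w - u) hs2
    have hπs : ((Submodule.orthogonalProjectionOnto F (act (mat g) (w - u)) : F) : Euc d)
        = act (mat g) (((Submodule.orthogonalProjectionOnto P w : P) : Euc d)
            - ((Submodule.orthogonalProjectionOnto P v : P) : Euc d)) := by
      rw [hprojF (w - u)]
      congr 1
      rw [map_sub, Submodule.coe_sub, hux]
    have hvuF : act (mat g) (v - u) ∈ Fᗮ := hFQ ▸ mem_mapMat.mpr ⟨v - u, hvu, rfl⟩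
    have hdecomp : act (mat g) (v - u)
        = (act (mat g) v - act (mat g) w) + act (mat g) (w - u) := by
      rw [show v - u = (v - w) + (w - u) by abel, act_add, act_sub]
    have hπ0 : ((Submodule.orthogonalProjectionOnto F (act (mat g) (v - u)) : F) : Euc d) = 0 := by
      rw [Submodule.orthogonalProjectionOnto_apply_of_mem_orthogonal hvuF,
        Submodule.coe_zero]
    have hπsum : ((Submodule.orthogonalProjectionOnto F (act (mat g) v - act (mat g) w) : F) : Euc d)
        + ((Submodule.orthogonalProjectionOnto F (act (mat g) (w - u)) : F) : Euc d) = 0 := by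
      have := congrArg (fun z => ((Submodule.orthogonalProjectionOnto F z : F) : Euc d)) hdecomp
      simp only [map_add, Submodule.coe_add] at this
      rw [← this, hπ0]
    have hsplit : act (mat g) (v - u)
        = ((act (mat g) v - act (mat g) w)
            - Submodule.orthogonalProjectionOnto F (act (mat g) v - act (mat g) w))
          + (act (mat g) (w - u) - Submodule.orthogonalProjectionOnto F (act (mat g) (w - u))) := by
      rw [hdecomp]
      have hr : ((act (mat g) v - act (mat g) w)
            - ((Submodule.orthogonalProjectionOnto F (act (mat g) v - act (mat g) w) : F) : Euc d))
          + (act (mat g) (w - u)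
            - ((Submodule.orthogonalProjectionOnto F (act (mat g) (w - u)) : F) : Euc d))
          = (act (mat g) v - act (mat g) w) + act (mat g) (w - u)
            - (((Submodule.orthogonalProjectionOnto F (act (mat g) v - act (mat g) w) : F) : Euc d)
              + ((Submodule.orthogonalProjectionOnto F (act (mat g) (w - u)) : F) : Euc d)) := by abel
      rw [hr, hπsum, sub_zero]
    have hn1 : ‖act (mat g) (v - u)‖
        ≤ ‖act (mat g) v - act (mat g) w‖
          + ‖act (mat g) (w - u) - Submodule.orthogonalProjectionOnto F (act (mat g) (w - u))‖ := by
      rw [hsplit]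
      exact (norm_add_le _ _).trans (add_le_add_left (norm_sub_proj_le F _) _)
    have hn2 : ‖act (mat g) (w - u) - Submodule.orthogonalProjectionOnto F (act (mat g) (w - u))‖
        ≤ ‖act (mat g) v - act (mat g) w‖ := by
      refine hcl.trans ?_
      rw [hπs]
      have hneg : act (mat g) (((Submodule.orthogonalProjectionOnto P w : P) : Euc d)
            - ((Submodule.orthogonalProjectionOnto P v : P) : Euc d))
          = -(act (mat g) (((Submodule.orthogonalProjectionOnto P v : P) : Euc d)
            - ((Submodule.orthogonalProjectionOnto P w : P) : Euc d))) := by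
        rw [show (((Submodule.orthogonalProjectionOnto P w : P) : Euc d)
          - ((Submodule.orthogonalProjectionOnto P v : P) : Euc d))
          = -((((Submodule.orthogonalProjectionOnto P v : P) : Euc d)
          - ((Submodule.orthogonalProjectionOnto P w : P) : Euc d))) by abel]
        exact map_neg (Matrix.toEuclideanCLM (𝕜 := ℝ) (mat g)) _
      rw [hneg, norm_neg]
      exact hb1
    have hmin := minRestrict_le (mat g) hvu
    have hpm : ‖v - Submodule.orthogonalProjectionOnto P₂ v‖ ≤ ‖v - u‖ := proj_min v huP₂
    have hmono : minRestrict (mat g) Q * ‖v - Submodule.orthogonalProjectionOnto P₂ v‖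
        ≤ minRestrict (mat g) Q * ‖v - u‖ := mul_le_mul_of_nonneg_left hpm hmnn
    linarith
  -- Put everything together.
  have hexpand : grassDist P₁ P₂
      = sSup { r | ∃ v ∈ P₁, v ≠ 0 ∧ r = sInf (aset v P₂) } := rfl
  have hfinal : grassDist P₁ P₂
      ≤ grassDist (mapMat (mat g) P₁) (mapMat (mat g) P₂)
        / (minRestrict (mat g) Q / (4 * normRestrict (mat g) P)) := by
    rw [hexpand]
    apply Real.sSup_le _ (div_nonneg hD'nn hcpos.le)
    rintro r ⟨v, hv, hv0, rfl⟩
    rw [le_div_iff₀ hcpos]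
    -- goal : sInf (aset v P₂) * c ≤ D'
    have hvn : (0:ℝ) < ‖v‖ := norm_pos_iff.mpr hv0
    have hTv0 : act (mat g) v ≠ 0 := by
      intro h
      exact hv0 (act_injective g (by rw [h, act_zero]))
    have hTvn : (0:ℝ) < ‖act (mat g) v‖ := norm_pos_iff.mpr hTv0
    have hr_le : sInf (aset v P₂) ≤ ‖v - Submodule.orthogonalProjectionOnto P₂ v‖ / ‖v‖ :=
      sInf_aset_le_dist hP₂ne hv0
    have hδnn : (0:ℝ) ≤ ‖v - Submodule.orthogonalProjectionOnto P₂ v‖ := norm_nonneg _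
    have hstepA : minRestrict (mat g) Q / 2 * ‖v - Submodule.orthogonalProjectionOnto P₂ v‖
        / ‖act (mat g) v‖ ≤ sInf (aset (act (mat g) v) (mapMat (mat g) P₂)) := by
      apply le_csInf (aset_nonempty _ hgP₂ne)
      rintro s ⟨w', hw'mem, hw'0, rfl⟩
      obtain ⟨w, hwP₂, rfl⟩ := mem_mapMat.mp hw'mem
      rw [div_le_iff₀ hTvn, sinAngle_mul_norm hTv0 hw'0]
      have hsm : ((⟪act (mat g) w, act (mat g) v⟫) / ‖act (mat g) w‖ ^ 2) • act (mat g) w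
          = act (mat g) (((⟪act (mat g) w, act (mat g) v⟫) / ‖act (mat g) w‖ ^ 2) • w) :=
        (act_smul _ _ _).symm
      rw [hsm]
      exact key v hv _ (Submodule.smul_mem _ _ hwP₂)
    have hstepB : sInf (aset (act (mat g) v) (mapMat (mat g) P₂))
        ≤ grassDist (mapMat (mat g) P₁) (mapMat (mat g) P₂) :=
      le_grassDist hgP₂ne (mem_mapMat.mpr ⟨v, hv, rfl⟩) hTv0
    have hgrow : ‖act (mat g) v‖ ≤ 2 * normRestrict (mat g) P * ‖v‖ := hTv2M v hv
    calc sInf (aset v P₂) * (minRestrict (mat g) Q / (4 * normRestrict (mat g) P))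
        ≤ (‖v - Submodule.orthogonalProjectionOnto P₂ v‖ / ‖v‖)
            * (minRestrict (mat g) Q / (4 * normRestrict (mat g) P)) :=
          mul_le_mul_of_nonneg_right hr_le hcpos.le
      _ ≤ minRestrict (mat g) Q / 2 * ‖v - Submodule.orthogonalProjectionOnto P₂ v‖ / ‖act (mat g) v‖ := by
          rw [div_mul_div_comm, div_le_div_iff₀ (by positivity) hTvn]
          nlinarith [mul_nonneg (mul_nonneg hmpos.le hδnn) (sub_nonneg.mpr hgrow),
            hδnn, hmpos.le, hvn.le, hMpos.le]
      _ ≤ sInf (aset (act (mat g) v) (mapMat (mat g) P₂)) := hstepA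
      _ ≤ _ := hstepB
  calc minRestrict (mat g) Q / (4 * normRestrict (mat g) P) * grassDist P₁ P₂
      ≤ minRestrict (mat g) Q / (4 * normRestrict (mat g) P)
        * (grassDist (mapMat (mat g) P₁) (mapMat (mat g) P₂)
          / (minRestrict (mat g) Q / (4 * normRestrict (mat g) P))) :=
        mul_le_mul_of_nonneg_left hfinal hcpos.le
    _ = grassDist (mapMat (mat g) P₁) (mapMat (mat g) P₂) := by
        rw [mul_comm]
        exact div_mul_cancel₀ _ (ne_of_gt hcpos)


end Paper
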